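/- Fix real constants A_p (p ≥ 1), B_p (p ≥ 1), C. For p ≥ 1 let a_p(τ) = A_p·((1−τ)/2)^p + B_p·((1+τ)/2)^p and let a₀(τ) = C (i.e. the ℓ = 0, p = 0 solution with the regularity condition D = 0 imposed), and set Q^0_p(τ) := (1+τ)·a_p'(τ) − p·a_p(τ). Then the one-sided limits lim_{τ→1⁻} Q^0_p(τ) exist for every p ≥ 0 and equal −A₁ when p = 1 and 0 for all p ≠ 1. Consequently, the classical ℓ = 0 Newman–Penrose constant of the spin-0 field is N⁺_{0,0} = −A_{1,0,0}, depending only on the initial-data parameter A_{1,0,0} and independent of the cut of future null infinity. -/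
import Mathlib


noncomputable section

lemma NP_hasDerivAt (Ap Bp : ℝ) (p : ℕ) (τ : ℝ) :
    HasDerivAt (fun τ : ℝ => Ap * ((1 - τ) / 2) ^ p + Bp * ((1 + τ) / 2) ^ p)
      (Ap * ((p : ℝ) * ((1 - τ) / 2) ^ (p - 1) * (-(1/2)))
        + Bp * ((p : ℝ) * ((1 + τ) / 2) ^ (p - 1) * (1/2))) τ := by
  have h1 : HasDerivAt (fun τ : ℝ => (1 - τ) / 2) (-(1/2)) τ := by
    simpa [neg_div] using (((hasDerivAt_id τ).const_sub 1).div_const 2)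
  have h2 : HasDerivAt (fun τ : ℝ => (1 + τ) / 2) (1/2) τ := by
    simpa using (((hasDerivAt_id τ).const_add 1).div_const 2)
  exact ((h1.pow p).const_mul Ap).add ((h2.pow p).const_mul Bp)

/-- The classical `ℓ = 0` Newman–Penrose constant: with the regularity condition
`D = 0` imposed (`a₀ = C`), and `a_p(τ) = A_p((1-τ)/2)^p + B_p((1+τ)/2)^p` for `p ≥ 1`,
the one-sided limits as `τ → 1⁻` of `Q⁰_p(τ) = (1+τ)a_p'(τ) - p·a_p(τ)` exist for every
`p ≥ 0` and equal `-A₁` when `p = 1` and `0` for all `p ≠ 1`; hence `N⁺₀₀ = -A₁`,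
depending only on `A₁` and independent of the cut of future null infinity. -/
theorem classical_NP_constant_ell_zero
    (A B : ℕ → ℝ) (C : ℝ) (a : ℕ → ℝ → ℝ)
    (ha0 : a 0 = fun _ => C)
    (hap : ∀ p : ℕ, 1 ≤ p → a p = fun τ =>
      A p * ((1 - τ) / 2) ^ p + B p * ((1 + τ) / 2) ^ p) :
    ∀ p : ℕ,
      Filter.Tendsto (fun τ : ℝ => (1 + τ) * deriv (a p) τ - (p : ℝ) * a p τ)
        (nhdsWithin 1 (Set.Iio 1))
        (nhds (if p = 1 then -A 1 else 0)) := by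
  intro p
  rcases Nat.eq_zero_or_pos p with hp | hp
  · subst hp
    simp only [ha0, deriv_const', Nat.cast_zero, zero_mul, mul_zero, sub_zero]
    simp
  · rw [hap p hp]
    have hd : (deriv fun τ : ℝ => A p * ((1 - τ) / 2) ^ p + B p * ((1 + τ) / 2) ^ p)
        = fun τ : ℝ => A p * ((p : ℝ) * ((1 - τ) / 2) ^ (p - 1) * (-(1/2)))
          + B p * ((p : ℝ) * ((1 + τ) / 2) ^ (p - 1) * (1/2)) :=
      funext fun τ => (NP_hasDerivAt (A p) (B p) p τ).deriv
    rw [hd]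
    set g : ℝ → ℝ := fun τ =>
      (1 + τ) * (A p * ((p : ℝ) * ((1 - τ) / 2) ^ (p - 1) * (-(1/2)))
          + B p * ((p : ℝ) * ((1 + τ) / 2) ^ (p - 1) * (1/2)))
        - (p : ℝ) * (A p * ((1 - τ) / 2) ^ p + B p * ((1 + τ) / 2) ^ p) with hg
    have hc : ContinuousAt g 1 := by fun_prop
    have hval : g 1 = if p = 1 then -A 1 else 0 := by
      by_cases h1 : p = 1
      · subst h1; simp [hg]; ring
      · have h2 : 2 ≤ p := by omega
        have : ((0 : ℝ)) ^ (p - 1) = 0 := zero_pow (by omega)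
        simp only [hg, h1, if_false, show ((1:ℝ) - 1) / 2 = 0 by norm_num,
          show ((1:ℝ) + 1) / 2 = 1 by norm_num,
          zero_pow (by omega : p - 1 ≠ 0), zero_pow (by omega : p ≠ 0), one_pow]
        ring
    rw [← hval]
    exact hc.tendsto.mono_left nhdsWithin_le_nhds
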